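/- Let e ~ N(0,1), τ ≥ 1, and X a standard Gaussian vector independent of e, with s a unit vector. Then the conditional random variable ⟨X,s⟩·e given {|e| ≥ τ} is sub-exponential with sub-exponential norm at most C·τ for a universal constant C; i.e., sup_{p≥1} p^{-1}·E[|⟨X,s⟩·e|^p | |e| ≥ τ]^{1/p} ≤ C·τ. -/

import Mathlib

open MeasureTheory ProbabilityTheory RealInnerProductSpace

/-- The standard Gaussian measure `N(0, I_d)` on `ℝ^d`. -/
noncomputable def stdGaussian (d : ℕ) : Measure (EuclideanSpace ℝ (Fin d)) :=
  (Measure.pi fun _ : Fin d => gaussianReal 0 1).map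
    (MeasurableEquiv.toLp 2 (Fin d → ℝ))

/-- `(X, e)` with `X ~ N(0, I_d)` and `e ~ N(0,1)` independent. -/
noncomputable def jointGaussian (d : ℕ) : Measure (EuclideanSpace ℝ (Fin d) × ℝ) :=
  (stdGaussian d).prod (gaussianReal 0 1)

section Helpers

open Real Set Filter Topology
open scoped NNReal ENNReal

/-! ### One-dimensional Gaussian facts -/

lemma gauss_pdf_eq (x : ℝ) :
    gaussianPDFReal 0 1 x = (Real.sqrt (2 * π))⁻¹ * rexp (-x ^ 2 / 2) := by
  simp [gaussianPDFReal]

lemma gauss_pdf_nonneg (x : ℝ) : 0 ≤ gaussianPDFReal 0 1 x :=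
  gaussianPDFReal_nonneg 0 1 x

lemma gaussPDF_coe : gaussianPDF 0 1
    = fun x => ((Real.toNNReal (gaussianPDFReal 0 1 x) : ℝ≥0) : ℝ≥0∞) := rfl

lemma smul_pdf_eq (g : ℝ → ℝ) :
    (fun x => (Real.toNNReal (gaussianPDFReal 0 1 x)) • g x)
      = fun x => gaussianPDFReal 0 1 x * g x := by
  funext x
  simp [NNReal.smul_def, Real.coe_toNNReal _ (gauss_pdf_nonneg x)]

lemma integral_gauss_eq (g : ℝ → ℝ) :
    ∫ x, g x ∂(gaussianReal 0 1) = ∫ x, gaussianPDFReal 0 1 x * g x := by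
  rw [gaussianReal_of_var_ne_zero 0 one_ne_zero, gaussPDF_coe,
    integral_withDensity_eq_integral_smul (measurable_gaussianPDFReal 0 1).real_toNNReal g,
    smul_pdf_eq]

lemma setIntegral_gauss_eq (g : ℝ → ℝ) {s : Set ℝ} (hs : MeasurableSet s) :
    ∫ x in s, g x ∂(gaussianReal 0 1) = ∫ x in s, gaussianPDFReal 0 1 x * g x := by
  rw [gaussianReal_of_var_ne_zero 0 one_ne_zero, gaussPDF_coe,
    setIntegral_withDensity_eq_setIntegral_smul
      (measurable_gaussianPDFReal 0 1).real_toNNReal g hs]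
  simp only [NNReal.smul_def, Real.coe_toNNReal _ (gauss_pdf_nonneg _), smul_eq_mul]

lemma integrable_gauss_iff (g : ℝ → ℝ) :
    Integrable g (gaussianReal 0 1)
      ↔ Integrable (fun x => gaussianPDFReal 0 1 x * g x) volume := by
  rw [gaussianReal_of_var_ne_zero 0 one_ne_zero, gaussPDF_coe,
    integrable_withDensity_iff_integrable_smul (measurable_gaussianPDFReal 0 1).real_toNNReal,
    smul_pdf_eq]

lemma integrand_mgf (c : ℝ) :
    (fun x => gaussianPDFReal 0 1 x * rexp (c * x))
      = fun x => rexp (c ^ 2 / 2) * ((Real.sqrt (2 * π))⁻¹ * rexp (-(1/2) * (x - c) ^ 2)) := by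
  funext x
  rw [gauss_pdf_eq, mul_assoc, ← Real.exp_add, mul_comm (rexp (c ^ 2 / 2)), mul_assoc,
    ← Real.exp_add]
  congr 1
  ring

lemma integrable_exp_gauss (c : ℝ) : Integrable (fun x => rexp (c * x)) (gaussianReal 0 1) := by
  rw [integrable_gauss_iff, integrand_mgf]
  exact (((integrable_exp_neg_mul_sq (by norm_num : (0:ℝ) < 1/2)).comp_sub_right
    c).const_mul _).const_mul _

lemma integral_exp_gauss (c : ℝ) :
    ∫ x, rexp (c * x) ∂(gaussianReal 0 1) = rexp (c ^ 2 / 2) := by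
  rw [integral_gauss_eq, integrand_mgf, integral_const_mul, integral_const_mul,
    integral_sub_right_eq_self (fun x => rexp (-(1/2) * x ^ 2)) c, integral_gaussian]
  rw [show π / (1/2) = 2 * π by ring]
  rw [inv_mul_cancel₀ (by positivity : Real.sqrt (2 * π) ≠ 0), mul_one]

/-! ### Product measure wrappers -/

lemma my_integral_pi {d : ℕ} (f : Fin d → ℝ → ℝ) :
    ∫ y : Fin d → ℝ, ∏ i, f i (y i) ∂(Measure.pi fun _ => gaussianReal 0 1)
      = ∏ i, ∫ x, f i x ∂(gaussianReal 0 1) := by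
  letI : MeasureSpace ℝ := ⟨gaussianReal 0 1⟩
  haveI : SigmaFinite (volume : Measure ℝ) := by
    change SigmaFinite (gaussianReal 0 1); infer_instance
  exact MeasureTheory.integral_fintype_prod_eq_prod (ι := Fin d) f

lemma my_integrable_pi {d : ℕ} (f : Fin d → ℝ → ℝ)
    (h : ∀ i, Integrable (f i) (gaussianReal 0 1)) :
    Integrable (fun y : Fin d → ℝ => ∏ i, f i (y i))
      (Measure.pi fun _ => gaussianReal 0 1) := by
  letI : MeasureSpace ℝ := ⟨gaussianReal 0 1⟩
  haveI : SigmaFinite (volume : Measure ℝ) := by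
    change SigmaFinite (gaussianReal 0 1); infer_instance
  exact MeasureTheory.Integrable.fintype_prod_dep h

lemma exp_sum_factor {d : ℕ} (s : Fin d → ℝ) (c : ℝ) :
    (fun y : Fin d → ℝ => rexp (c * ∑ i, y i * s i))
      = fun y => ∏ i, rexp (c * s i * y i) := by
  funext y
  rw [Finset.mul_sum, Real.exp_sum]
  exact Finset.prod_congr rfl fun i _ => by ring_nf

lemma integrable_exp_pi {d : ℕ} (s : Fin d → ℝ) (c : ℝ) :
    Integrable (fun y : Fin d → ℝ => rexp (c * ∑ i, y i * s i))
      (Measure.pi fun _ => gaussianReal 0 1) := by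
  rw [exp_sum_factor]
  exact my_integrable_pi _ fun i => integrable_exp_gauss (c * s i)

lemma integral_exp_pi {d : ℕ} (s : Fin d → ℝ) (c : ℝ) :
    ∫ y : Fin d → ℝ, rexp (c * ∑ i, y i * s i) ∂(Measure.pi fun _ => gaussianReal 0 1)
      = rexp (c ^ 2 * (∑ i, s i ^ 2) / 2) := by
  rw [exp_sum_factor, my_integral_pi (fun i x => rexp (c * s i * x))]
  simp_rw [integral_exp_gauss]
  rw [← Real.exp_sum]
  congr 1
  rw [← Finset.sum_div]
  congr 1
  rw [Finset.mul_sum]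
  exact Finset.sum_congr rfl fun i _ => by ring

/-! ### Pointwise inequalities -/

lemma rpow_le_exp_aux {p t : ℝ} (hp : 1 ≤ p) (ht : 0 ≤ t) :
    t ^ p ≤ (p / rexp 1) ^ p * rexp t := by
  have hp0 : (0:ℝ) < p := one_pos.trans_le hp
  have h1 : t / p ≤ rexp (t / p - 1) := by
    have := Real.add_one_le_exp (t / p - 1); linarith
  have h2 : (t / p) ^ p ≤ rexp (t / p - 1) ^ p :=
    Real.rpow_le_rpow (div_nonneg ht hp0.le) h1 hp0.le
  have h3 : rexp (t / p - 1) ^ p = rexp (t - p) := by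
    rw [← Real.exp_mul]
    congr 1
    field_simp
  have h5 : (t / p) ^ p = t ^ p / p ^ p := Real.div_rpow ht hp0.le p
  have hpp : (0:ℝ) < p ^ p := Real.rpow_pos_of_pos hp0 p
  have h6 : (p / rexp 1) ^ p = p ^ p * rexp (-p) := by
    rw [Real.div_rpow hp0.le (Real.exp_pos 1).le, ← Real.exp_mul, one_mul,
      div_eq_mul_inv, ← Real.exp_neg]
  rw [h6]
  have h7 : t ^ p / p ^ p ≤ rexp (t - p) := by rw [← h5, ← h3]; exact h2
  calc t ^ p = p ^ p * (t ^ p / p ^ p) := by field_simp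
    _ ≤ p ^ p * rexp (t - p) := by
        exact mul_le_mul_of_nonneg_left h7 hpp.le
    _ = p ^ p * rexp (-p) * rexp t := by
        rw [mul_assoc, ← Real.exp_add]; congr 2; ring

lemma abs_rpow_le_mgf {p : ℝ} (hp : 1 ≤ p) (w : ℝ) :
    |w| ^ p ≤ p ^ (p/2) * (rexp (Real.sqrt p * w) + rexp ((-Real.sqrt p) * w)) := by
  have hp0 : (0:ℝ) < p := one_pos.trans_le hp
  have hsp : (0:ℝ) < Real.sqrt p := Real.sqrt_pos.2 hp0
  have h1 : (Real.sqrt p * |w|) ^ p ≤ (p / rexp 1) ^ p * rexp (Real.sqrt p * |w|) :=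
    rpow_le_exp_aux hp (by positivity)
  have h2 : (Real.sqrt p * |w|) ^ p = Real.sqrt p ^ p * |w| ^ p :=
    Real.mul_rpow hsp.le (abs_nonneg w)
  have h3 : rexp (Real.sqrt p * |w|)
      ≤ rexp (Real.sqrt p * w) + rexp ((-Real.sqrt p) * w) := by
    rcases le_total 0 w with hw | hw
    · rw [abs_of_nonneg hw]
      nlinarith [Real.exp_pos ((-Real.sqrt p) * w)]
    · rw [abs_of_nonpos hw, show Real.sqrt p * (-w) = (-Real.sqrt p) * w by ring]
      nlinarith [Real.exp_pos (Real.sqrt p * w)]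
  have hsppow : (0:ℝ) < Real.sqrt p ^ p := Real.rpow_pos_of_pos hsp p
  have key : |w| ^ p ≤ ((p / rexp 1) ^ p / Real.sqrt p ^ p)
      * (rexp (Real.sqrt p * w) + rexp ((-Real.sqrt p) * w)) := by
    rw [div_mul_eq_mul_div, le_div_iff₀ hsppow]
    calc |w| ^ p * Real.sqrt p ^ p = (Real.sqrt p * |w|) ^ p := by rw [h2]; ring
      _ ≤ (p / rexp 1) ^ p * rexp (Real.sqrt p * |w|) := h1
      _ ≤ (p / rexp 1) ^ p * (rexp (Real.sqrt p * w) + rexp ((-Real.sqrt p) * w)) := by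
          exact mul_le_mul_of_nonneg_left h3 (Real.rpow_nonneg (by positivity) p)
  refine key.trans ?_
  have hq : (p / rexp 1) ^ p / Real.sqrt p ^ p ≤ p ^ (p/2) := by
    rw [← Real.div_rpow (by positivity) hsp.le]
    have hd : p / rexp 1 / Real.sqrt p = Real.sqrt p / rexp 1 := by
      rw [div_div, mul_comm, ← div_div, Real.div_sqrt]
    rw [hd]
    have he1 : (1:ℝ) ≤ rexp 1 := by
      have := Real.add_one_le_exp 1; linarith
    have h4 : Real.sqrt p / rexp 1 ≤ Real.sqrt p := div_le_self hsp.le he1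
    calc (Real.sqrt p / rexp 1) ^ p ≤ Real.sqrt p ^ p :=
        Real.rpow_le_rpow (by positivity) h4 hp0.le
      _ = p ^ (p/2) := by
        rw [Real.sqrt_eq_rpow, ← Real.rpow_mul hp0.le]
        congr 1
        ring
  have hpos : (0:ℝ) ≤ rexp (Real.sqrt p * w) + rexp ((-Real.sqrt p) * w) := by positivity
  exact mul_le_mul_of_nonneg_right hq hpos

/-! ### Moment bound for the Gaussian linear form -/

instance stdGaussian_isProb (d : ℕ) : IsProbabilityMeasure (stdGaussian d) := by
  rw [_root_.stdGaussian]
  exact Measure.isProbabilityMeasure_map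
    (MeasurableEquiv.toLp 2 (Fin d → ℝ)).measurable.aemeasurable

lemma inner_symm_eq {d : ℕ} (s : EuclideanSpace ℝ (Fin d)) (y : Fin d → ℝ) :
    ⟪MeasurableEquiv.toLp 2 (Fin d → ℝ) y, s⟫ = ∑ i, y i * s i := by
  simp [PiLp.inner_apply, MeasurableEquiv.toLp_apply, RCLike.inner_apply, conj_trivial, mul_comm]

lemma sum_sq_eq_one {d : ℕ} (s : EuclideanSpace ℝ (Fin d)) (hs : ‖s‖ = 1) :
    ∑ i, s i ^ 2 = 1 := by
  rw [EuclideanSpace.norm_eq] at hs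
  have := Real.sqrt_eq_one.mp hs
  simpa [Real.norm_eq_abs, sq_abs] using this

lemma momentA {d : ℕ} (s : EuclideanSpace ℝ (Fin d)) (hs : ‖s‖ = 1) {p : ℝ} (hp : 1 ≤ p) :
    ∫ x, |⟪x, s⟫| ^ p ∂stdGaussian d ≤ 2 * p ^ (p/2) * rexp (p/2) := by
  have hp0 : (0:ℝ) < p := one_pos.trans_le hp
  rw [_root_.stdGaussian, MeasureTheory.integral_map_equiv]
  simp only [inner_symm_eq]
  have hint1 := integrable_exp_pi (fun i => s i) (Real.sqrt p)
  have hint2 := integrable_exp_pi (fun i => s i) (-Real.sqrt p)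
  have hmono : ∫ y : Fin d → ℝ, |∑ i, y i * s i| ^ p ∂(Measure.pi fun _ => gaussianReal 0 1)
      ≤ ∫ y : Fin d → ℝ, p ^ (p/2) * (rexp (Real.sqrt p * ∑ i, y i * s i)
          + rexp ((-Real.sqrt p) * ∑ i, y i * s i)) ∂(Measure.pi fun _ => gaussianReal 0 1) := by
    refine integral_mono_of_nonneg (ae_of_all _ fun y => ?_) (((hint1.add hint2).const_mul _))
      (ae_of_all _ fun y => ?_)
    · exact Real.rpow_nonneg (abs_nonneg _) p
    · exact abs_rpow_le_mgf hp _
  refine hmono.trans ?_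
  rw [integral_const_mul, integral_add hint1 hint2, integral_exp_pi, integral_exp_pi,
    sum_sq_eq_one s hs]
  rw [Real.sq_sqrt hp0.le, neg_pow, Real.sq_sqrt hp0.le]
  simp only [mul_one, even_two, Even.neg_pow, one_pow]
  ring_nf
  nlinarith [Real.rpow_pos_of_pos hp0 (p/2), Real.exp_pos (p/2), Real.exp_pos (p*(1/2))]

/-! ### Tail lemmas -/

lemma usq_bound {u p : ℝ} (hu : 0 ≤ u) (hp : 1 ≤ p) :
    u ^ p * rexp (-(u ^ 2 / 4)) ≤ (2 * p) ^ (p / 2) := by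
  have hp0 : (0:ℝ) < p := one_pos.trans_le hp
  have hev : (0:ℝ) < rexp (u ^ 2 / (2 * p)) := Real.exp_pos _
  have h1 : u ^ 2 * rexp (-(u ^ 2 / (2 * p))) ≤ 2 * p := by
    have h := Real.add_one_le_exp (u ^ 2 / (2 * p))
    rw [Real.exp_neg, ← div_eq_mul_inv, div_le_iff₀ hev]
    have hv : 2 * p * (u ^ 2 / (2 * p)) = u ^ 2 := by field_simp
    nlinarith [mul_le_mul_of_nonneg_left h (by linarith : (0:ℝ) ≤ 2 * p)]
  have h2 : (u ^ 2 * rexp (-(u ^ 2 / (2 * p)))) ^ (p / 2) ≤ (2 * p) ^ (p / 2) :=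
    Real.rpow_le_rpow (by positivity) h1 (by positivity)
  have e0 : (u ^ 2 * rexp (-(u ^ 2 / (2 * p)))) ^ (p / 2)
      = (u ^ 2 : ℝ) ^ (p / 2 : ℝ) * (rexp (-(u ^ 2 / (2 * p)))) ^ (p / 2 : ℝ) :=
    Real.mul_rpow (by positivity) (Real.exp_pos _).le
  have e1 : (u ^ 2 : ℝ) ^ (p / 2 : ℝ) = u ^ p := by
    rw [← Real.rpow_natCast u 2, ← Real.rpow_mul hu]
    congr 1
    push_cast
    ring
  have e2 : (rexp (-(u ^ 2 / (2 * p)))) ^ (p / 2 : ℝ) = rexp (-(u ^ 2 / 4)) := by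
    rw [← Real.exp_mul]
    congr 1
    field_simp
    ring
  rw [e0, e1, e2] at h2
  exact h2

lemma add_rpow_le {a b p : ℝ} (ha : 0 ≤ a) (hb : 0 ≤ b) (hp : 1 ≤ p) :
    (a + b) ^ p ≤ 2 ^ p * (a ^ p + b ^ p) := by
  have hp0 : (0:ℝ) < p := one_pos.trans_le hp
  have h2p : (0:ℝ) ≤ (2:ℝ) ^ p := Real.rpow_nonneg (by norm_num) p
  rcases le_total a b with h | h
  · calc (a + b) ^ p ≤ (2 * b) ^ p := Real.rpow_le_rpow (by linarith) (by linarith) hp0.le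
      _ = 2 ^ p * b ^ p := Real.mul_rpow (by norm_num) hb
      _ ≤ 2 ^ p * (a ^ p + b ^ p) := by
          have := Real.rpow_nonneg ha p
          nlinarith
  · calc (a + b) ^ p ≤ (2 * a) ^ p := Real.rpow_le_rpow (by linarith) (by linarith) hp0.le
      _ = 2 ^ p * a ^ p := Real.mul_rpow (by norm_num) ha
      _ ≤ 2 ^ p * (a ^ p + b ^ p) := by
          have := Real.rpow_nonneg hb p
          nlinarith

lemma tail_pointwise {τ p y : ℝ} (hτ : 1 ≤ τ) (hp : 1 ≤ p) (hy : τ ≤ y) :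
    gaussianPDFReal 0 1 y * |y| ^ p
      ≤ (Real.sqrt (2 * π))⁻¹ * rexp (-(τ ^ 2) / 2) *
        (2 ^ p * (τ ^ p * rexp (-(τ * (y - τ))) + (2 * p) ^ (p / 2) * rexp (-((y - τ) ^ 2 / 4)))) := by
  have hτ0 : (0:ℝ) < τ := one_pos.trans_le hτ
  have hy0 : (0:ℝ) ≤ y := le_trans hτ0.le hy
  have hu0 : (0:ℝ) ≤ y - τ := sub_nonneg.2 hy
  have hsplit : rexp (-y ^ 2 / 2)
      = rexp (-(τ ^ 2) / 2) * (rexp (-(τ * (y - τ))) * rexp (-((y - τ) ^ 2 / 2))) := by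
    rw [← Real.exp_add, ← Real.exp_add]
    congr 1
    ring
  have hyp : y ^ p ≤ 2 ^ p * (τ ^ p + (y - τ) ^ p) := by
    have hyy : y = τ + (y - τ) := by ring
    calc y ^ p = (τ + (y - τ)) ^ p := by rw [← hyy]
      _ ≤ 2 ^ p * (τ ^ p + (y - τ) ^ p) := add_rpow_le hτ0.le hu0 hp
  have h1 : rexp (-((y - τ) ^ 2 / 2)) ≤ 1 := Real.exp_le_one_iff.2 (by nlinarith [sq_nonneg (y - τ)])
  have h2 : rexp (-(τ * (y - τ))) ≤ 1 := Real.exp_le_one_iff.2 (by nlinarith)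
  have h3 : (y - τ) ^ p * rexp (-((y - τ) ^ 2 / 4)) ≤ (2 * p) ^ (p / 2) := usq_bound hu0 hp
  have h4 : rexp (-((y - τ) ^ 2 / 2)) = rexp (-((y - τ) ^ 2 / 4)) * rexp (-((y - τ) ^ 2 / 4)) := by
    rw [← Real.exp_add]; congr 1; ring
  have key : y ^ p * (rexp (-(τ * (y - τ))) * rexp (-((y - τ) ^ 2 / 2)))
      ≤ 2 ^ p * (τ ^ p * rexp (-(τ * (y - τ))) + (2 * p) ^ (p / 2) * rexp (-((y - τ) ^ 2 / 4))) := by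
    have hepos1 : (0:ℝ) < rexp (-(τ * (y - τ))) := Real.exp_pos _
    have hepos2 : (0:ℝ) < rexp (-((y - τ) ^ 2 / 2)) := Real.exp_pos _
    have hepos3 : (0:ℝ) < rexp (-((y - τ) ^ 2 / 4)) := Real.exp_pos _
    have htp : (0:ℝ) ≤ τ ^ p := Real.rpow_nonneg hτ0.le p
    have hup : (0:ℝ) ≤ (y - τ) ^ p := Real.rpow_nonneg hu0 p
    have e1 : y ^ p * (rexp (-(τ * (y - τ))) * rexp (-((y - τ) ^ 2 / 2)))
        ≤ (2 ^ p * (τ ^ p + (y - τ) ^ p)) * (rexp (-(τ * (y - τ))) * rexp (-((y - τ) ^ 2 / 2))) :=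
      mul_le_mul_of_nonneg_right hyp (by positivity)
    refine e1.trans ?_
    have t1 : τ ^ p * (rexp (-(τ * (y - τ))) * rexp (-((y - τ) ^ 2 / 2)))
        ≤ τ ^ p * rexp (-(τ * (y - τ))) := by
      calc τ ^ p * (rexp (-(τ * (y - τ))) * rexp (-((y - τ) ^ 2 / 2)))
          = (τ ^ p * rexp (-(τ * (y - τ)))) * rexp (-((y - τ) ^ 2 / 2)) := by ring
        _ ≤ (τ ^ p * rexp (-(τ * (y - τ)))) * 1 :=
            mul_le_mul_of_nonneg_left h1 (mul_nonneg htp hepos1.le)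
        _ = τ ^ p * rexp (-(τ * (y - τ))) := by ring
    have t2 : (y - τ) ^ p * (rexp (-(τ * (y - τ))) * rexp (-((y - τ) ^ 2 / 2)))
        ≤ (2 * p) ^ (p / 2) * rexp (-((y - τ) ^ 2 / 4)) := by
      rw [h4]
      calc (y - τ) ^ p * (rexp (-(τ * (y - τ))) * (rexp (-((y - τ) ^ 2 / 4)) * rexp (-((y - τ) ^ 2 / 4))))
          = (((y - τ) ^ p * rexp (-((y - τ) ^ 2 / 4))) * rexp (-((y - τ) ^ 2 / 4))) * rexp (-(τ * (y - τ))) := by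
            ring
        _ ≤ (((y - τ) ^ p * rexp (-((y - τ) ^ 2 / 4))) * rexp (-((y - τ) ^ 2 / 4))) * 1 :=
            mul_le_mul_of_nonneg_left h2 (by positivity)
        _ = ((y - τ) ^ p * rexp (-((y - τ) ^ 2 / 4))) * rexp (-((y - τ) ^ 2 / 4)) := by ring
        _ ≤ (2 * p) ^ (p / 2) * rexp (-((y - τ) ^ 2 / 4)) :=
            mul_le_mul_of_nonneg_right h3 hepos3.le
    calc (2 ^ p * (τ ^ p + (y - τ) ^ p)) * (rexp (-(τ * (y - τ))) * rexp (-((y - τ) ^ 2 / 2)))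
        = 2 ^ p * (τ ^ p * (rexp (-(τ * (y - τ))) * rexp (-((y - τ) ^ 2 / 2)))
            + (y - τ) ^ p * (rexp (-(τ * (y - τ))) * rexp (-((y - τ) ^ 2 / 2)))) := by ring
      _ ≤ 2 ^ p * (τ ^ p * rexp (-(τ * (y - τ))) + (2 * p) ^ (p / 2) * rexp (-((y - τ) ^ 2 / 4))) := by
          have := add_le_add t1 t2
          exact mul_le_mul_of_nonneg_left this (Real.rpow_nonneg (by norm_num) p)
  calc gaussianPDFReal 0 1 y * |y| ^ p
      = (Real.sqrt (2 * π))⁻¹ * rexp (-(τ ^ 2) / 2)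
        * (y ^ p * (rexp (-(τ * (y - τ))) * rexp (-((y - τ) ^ 2 / 2)))) := by
        rw [gauss_pdf_eq, abs_of_nonneg hy0, hsplit]; ring
    _ ≤ (Real.sqrt (2 * π))⁻¹ * rexp (-(τ ^ 2) / 2) *
        (2 ^ p * (τ ^ p * rexp (-(τ * (y - τ))) + (2 * p) ^ (p / 2) * rexp (-((y - τ) ^ 2 / 4)))) :=
        mul_le_mul_of_nonneg_left key (by positivity)

lemma integrable_abs_rpow {p : ℝ} (hp : 1 ≤ p) :
    Integrable (fun y : ℝ => |y| ^ p) (gaussianReal 0 1) := by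
  refine Integrable.mono' (g := fun y => p ^ (p/2) * (rexp (Real.sqrt p * y)
    + rexp ((-Real.sqrt p) * y)))
    (((integrable_exp_gauss (Real.sqrt p)).add (integrable_exp_gauss (-Real.sqrt p))).const_mul _)
    ?_ (ae_of_all _ fun y => ?_)
  · exact ((_root_.continuous_abs.rpow_const fun x => Or.inr (by positivity)).measurable).aestronglyMeasurable
  · rw [Real.norm_eq_abs, abs_of_nonneg (Real.rpow_nonneg (abs_nonneg y) p)]
    exact abs_rpow_le_mgf hp y

lemma exp_rate_integrableOn {τ : ℝ} (hτ0 : 0 < τ) :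
    IntegrableOn (fun y : ℝ => rexp (-(τ * (y - τ)))) (Ioi τ) volume := by
  have h0 : IntegrableOn (fun y : ℝ => rexp (-τ * y)) (Ioi τ) volume :=
    exp_neg_integrableOn_Ioi τ hτ0
  have h1 := h0.const_mul (rexp (τ ^ 2))
  have hfun : (fun y : ℝ => rexp (τ ^ 2) * rexp (-τ * y)) = fun y => rexp (-(τ * (y - τ))) :=
    funext fun y => by rw [← Real.exp_add]; congr 1; ring
  rwa [hfun] at h1

lemma integral_exp_rate {τ : ℝ} (hτ0 : 0 < τ) :
    ∫ y in Ioi τ, rexp (-(τ * (y - τ))) = τ⁻¹ := by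
  have hderiv : ∀ x ∈ Ici τ, HasDerivAt (fun y => -τ⁻¹ * rexp (-(τ * (y - τ))))
      (rexp (-(τ * (x - τ)))) x := by
    intro x _
    have h1 : HasDerivAt (fun y : ℝ => -(τ * (y - τ))) (-τ) x := by
      have := (((hasDerivAt_id x).sub_const τ).const_mul τ).neg
      simp at this
      exact this
    have h2 := (h1.exp).const_mul (-τ⁻¹)
    rw [show -τ⁻¹ * (rexp (-(τ * (x - τ))) * -τ) = rexp (-(τ * (x - τ))) * (τ⁻¹ * τ) by ring,
      inv_mul_cancel₀ hτ0.ne', mul_one] at h2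
    exact h2
  have htend : Tendsto (fun y => -τ⁻¹ * rexp (-(τ * (y - τ)))) atTop (𝓝 0) := by
    rw [show (0:ℝ) = -τ⁻¹ * 0 by ring]
    apply Filter.Tendsto.const_mul
    apply Real.tendsto_exp_atBot.comp
    have h3 : Tendsto (fun y : ℝ => y - τ) atTop atTop :=
      tendsto_atTop_add_const_right _ _ tendsto_id
    have h4 : Tendsto (fun y : ℝ => τ * (y - τ)) atTop atTop :=
      Filter.Tendsto.const_mul_atTop hτ0 h3
    exact tendsto_neg_atTop_atBot.comp h4
  rw [integral_Ioi_of_hasDerivAt_of_tendsto' hderiv (exp_rate_integrableOn hτ0) htend]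
  simp

lemma quartic_integrable (τ : ℝ) :
    Integrable (fun y : ℝ => rexp (-((y - τ) ^ 2 / 4))) volume := by
  have h := (integrable_exp_neg_mul_sq (by norm_num : (0:ℝ) < 1/4)).comp_sub_right τ
  have hfun : (fun y : ℝ => rexp (-(1/4) * (y - τ) ^ 2)) = fun y => rexp (-((y - τ) ^ 2 / 4)) :=
    funext fun y => by congr 1; ring
  rwa [hfun] at h

lemma integral_quartic_le (τ : ℝ) :
    ∫ y in Ici τ, rexp (-((y - τ) ^ 2 / 4)) ≤ 2 * Real.sqrt π := by
  calc ∫ y in Ici τ, rexp (-((y - τ) ^ 2 / 4))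
      ≤ ∫ y, rexp (-((y - τ) ^ 2 / 4)) :=
        setIntegral_le_integral (quartic_integrable τ) (ae_of_all _ fun y => (Real.exp_pos _).le)
    _ = ∫ y, rexp (-(1/4) * y ^ 2) := by
        rw [← integral_sub_right_eq_self (fun y => rexp (-(1/4) * y ^ 2)) τ]
        congr 1
        funext y
        congr 1
        ring
    _ = Real.sqrt (π / (1/4)) := integral_gaussian (1/4)
    _ = 2 * Real.sqrt π := by
        rw [show π / (1/4) = 2 ^ 2 * π by ring, Real.sqrt_mul (by positivity),
          Real.sqrt_sq (by norm_num : (0:ℝ) ≤ 2)]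

lemma tail_Ici_bound {τ p : ℝ} (hτ : 1 ≤ τ) (hp : 1 ≤ p) :
    ∫ y in Ici τ, |y| ^ p ∂(gaussianReal 0 1)
      ≤ (Real.sqrt (2 * π))⁻¹ * rexp (-(τ ^ 2) / 2) *
        (2 ^ p * (τ ^ p * τ⁻¹ + (2 * p) ^ (p / 2) * (2 * Real.sqrt π))) := by
  have hτ0 : (0:ℝ) < τ := one_pos.trans_le hτ
  rw [setIntegral_gauss_eq _ measurableSet_Ici]
  have hIG1 : IntegrableOn (fun y : ℝ => rexp (-(τ * (y - τ)))) (Ici τ) volume := by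
    rw [integrableOn_Ici_iff_integrableOn_Ioi]
    exact exp_rate_integrableOn hτ0
  have hIG2 : IntegrableOn (fun y : ℝ => rexp (-((y - τ) ^ 2 / 4))) (Ici τ) volume :=
    (quartic_integrable τ).integrableOn
  have hIG : IntegrableOn (fun y : ℝ => (Real.sqrt (2 * π))⁻¹ * rexp (-(τ ^ 2) / 2) *
      (2 ^ p * (τ ^ p * rexp (-(τ * (y - τ))) + (2 * p) ^ (p / 2) * rexp (-((y - τ) ^ 2 / 4)))))
      (Ici τ) volume :=
    (((hIG1.const_mul (τ ^ p)).add (hIG2.const_mul ((2 * p) ^ (p / 2)))).const_mul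
      (2 ^ p)).const_mul _
  have hIF : IntegrableOn (fun y : ℝ => gaussianPDFReal 0 1 y * |y| ^ p) (Ici τ) volume :=
    ((integrable_gauss_iff _).1 (integrable_abs_rpow hp)).integrableOn
  have hmono := setIntegral_mono_on hIF hIG measurableSet_Ici
    (fun y hy => tail_pointwise hτ hp hy)
  refine hmono.trans ?_
  rw [integral_const_mul, integral_const_mul, integral_add (hIG1.const_mul _) (hIG2.const_mul _),
    integral_const_mul, integral_const_mul, integral_Ici_eq_integral_Ioi, integral_exp_rate hτ0]
  have hq := integral_quartic_le τ
  gcongr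

lemma neg_map_gauss : Measure.map (fun x : ℝ => -x) (gaussianReal 0 1) = gaussianReal 0 1 := by
  have h := gaussianReal_map_const_mul (μ := 0) (v := 1) (-1)
  have h2 : (⟨(-1:ℝ) ^ 2, sq_nonneg _⟩ : ℝ≥0) * 1 = 1 := by ext; norm_num
  rw [show (fun x : ℝ => -x) = fun x => -1 * x from funext fun x => by ring, h]
  congr 1
  · simp

lemma tail_split {τ p : ℝ} (hτ : 1 ≤ τ) (hp : 1 ≤ p) :
    ∫ y in {y : ℝ | τ ≤ |y|}, |y| ^ p ∂(gaussianReal 0 1)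
      = 2 * ∫ y in Ici τ, |y| ^ p ∂(gaussianReal 0 1) := by
  have hτ0 : (0:ℝ) < τ := one_pos.trans_le hτ
  have hTeq : {y : ℝ | τ ≤ |y|} = Iic (-τ) ∪ Ici τ := by
    ext y
    rw [Set.mem_setOf_eq, le_abs]
    simp [Set.mem_union, le_neg, or_comm]
  have hdisj : Disjoint (Iic (-τ)) (Ici τ) := by
    rw [Set.Iic_disjoint_Ici, not_le]
    linarith
  have hint := integrable_abs_rpow hp (p := p)
  rw [hTeq, setIntegral_union hdisj measurableSet_Ici hint.integrableOn hint.integrableOn]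
  have hmeas : AEStronglyMeasurable (fun y : ℝ => |y| ^ p)
      (Measure.map (fun x : ℝ => -x) (gaussianReal 0 1)) :=
    ((_root_.continuous_abs.rpow_const fun x => Or.inr (by positivity)).measurable).aestronglyMeasurable
  have hneg : ∫ y in Iic (-τ), |y| ^ p ∂(gaussianReal 0 1)
      = ∫ x in Ici τ, |x| ^ p ∂(gaussianReal 0 1) := by
    calc ∫ y in Iic (-τ), |y| ^ p ∂(gaussianReal 0 1)
        = ∫ y in Iic (-τ), |y| ^ p ∂(Measure.map (fun x : ℝ => -x) (gaussianReal 0 1)) := by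
          rw [neg_map_gauss]
      _ = ∫ x in (fun x : ℝ => -x) ⁻¹' (Iic (-τ)), |(-x)| ^ p ∂(gaussianReal 0 1) :=
          setIntegral_map measurableSet_Iic hmeas measurable_neg.aemeasurable
      _ = ∫ x in Ici τ, |x| ^ p ∂(gaussianReal 0 1) := by
          rw [show (fun x : ℝ => -x) ⁻¹' (Iic (-τ)) = Ici τ from by
            ext x; simp [neg_le_neg_iff]]
          simp_rw [abs_neg]
  rw [hneg]
  ring

lemma tail_measure_lb {τ : ℝ} (hτ : 1 ≤ τ) :
    (Real.sqrt (2 * π))⁻¹ * rexp (-(τ ^ 2 + 3) / 2) * τ⁻¹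
      ≤ ((gaussianReal 0 1) {y : ℝ | τ ≤ |y|}).toReal := by
  have hτ0 : (0:ℝ) < τ := one_pos.trans_le hτ
  have hi : τ⁻¹ ≤ 1 := by
    rw [← one_div]
    rw [div_le_one hτ0]
    exact hτ
  have hsub : Icc τ (τ + τ⁻¹) ⊆ {y : ℝ | τ ≤ |y|} := fun y hy => by
    rw [Set.mem_setOf_eq]
    exact hy.1.trans (le_abs_self y)
  have h1 : ((gaussianReal 0 1) (Icc τ (τ + τ⁻¹))).toReal
      ≤ ((gaussianReal 0 1) {y : ℝ | τ ≤ |y|}).toReal :=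
    ENNReal.toReal_mono (measure_ne_top _ _) (measure_mono hsub)
  refine le_trans ?_ h1
  rw [gaussianReal_apply_eq_integral 0 one_ne_zero,
    ENNReal.toReal_ofReal (setIntegral_nonneg measurableSet_Icc fun x _ => gauss_pdf_nonneg x)]
  have hpt : ∀ x ∈ Icc τ (τ + τ⁻¹),
      (Real.sqrt (2 * π))⁻¹ * rexp (-(τ ^ 2 + 3) / 2) ≤ gaussianPDFReal 0 1 x := by
    intro x hx
    rw [gauss_pdf_eq]
    have hx0 : 0 ≤ x := le_trans hτ0.le hx.1
    have hxsq : x ^ 2 ≤ τ ^ 2 + 3 := by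
      have hprod : 0 ≤ (τ + τ⁻¹ - x) * (τ + τ⁻¹ + x) :=
        mul_nonneg (sub_nonneg.2 hx.2) (by positivity)
      have hcc : τ * τ⁻¹ = 1 := mul_inv_cancel₀ hτ0.ne'
      have hii : τ⁻¹ * τ⁻¹ ≤ 1 := mul_le_one₀ hi (by positivity) hi
      nlinarith
    have := Real.exp_le_exp.2 (by linarith : -(τ ^ 2 + 3) / 2 ≤ -x ^ 2 / 2)
    exact mul_le_mul_of_nonneg_left this (by positivity)
  have hconst := setIntegral_ge_of_const_le (μ := volume) measurableSet_Icc
    (by rw [Real.volume_Icc]; exact ENNReal.ofReal_ne_top) hpt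
    ((integrable_gaussianPDFReal 0 1).integrableOn)
  rw [Real.volume_real_Icc_of_le (le_add_of_nonneg_right (by positivity)), show τ + τ⁻¹ - τ = τ⁻¹ by ring, smul_eq_mul, mul_comm] at hconst
  exact hconst

/-! ### Final numeric estimates -/

lemma exp_half_le_two : rexp (1/2 : ℝ) ≤ 2 := by
  have hsq : rexp (1/2 : ℝ) * rexp (1/2 : ℝ) = rexp 1 := by
    rw [← Real.exp_add]; norm_num
  nlinarith [Real.exp_pos (1/2 : ℝ), Real.exp_one_lt_d9]

lemma exp_p_half_le {p : ℝ} (hp : 0 ≤ p) : rexp (p/2) ≤ 2 ^ p := by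
  have h1 : rexp (p/2) = (rexp (1/2 : ℝ)) ^ (p : ℝ) := by
    rw [← Real.exp_mul]; congr 1; ring
  rw [h1]
  exact Real.rpow_le_rpow (Real.exp_pos _).le exp_half_le_two hp

lemma exp_neg32 : (1:ℝ)/5 ≤ rexp (-(3:ℝ)/2) := by
  have h1 : rexp (3/2 : ℝ) ≤ 5 := by
    have hsq : rexp (3/2 : ℝ) * rexp (3/2 : ℝ) = rexp 3 := by
      rw [← Real.exp_add]; norm_num
    have h3 : rexp (3:ℝ) = rexp 1 * rexp 1 * rexp 1 := by
      rw [← Real.exp_add, ← Real.exp_add]; norm_num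
    nlinarith [Real.exp_pos (3/2 : ℝ), Real.exp_pos (1:ℝ), Real.exp_one_lt_d9]
  have h2 : rexp (-(3:ℝ)/2) = (rexp (3/2 : ℝ))⁻¹ := by
    rw [← Real.exp_neg]; congr 1; ring
  rw [h2, one_div]
  exact inv_anti₀ (Real.exp_pos _) h1

lemma sqrt_pi_le_two : Real.sqrt π ≤ 2 := by
  nlinarith [Real.sq_sqrt Real.pi_nonneg, Real.sqrt_nonneg π, Real.pi_le_four]

lemma final_numeric {τ p : ℝ} (hτ : 1 ≤ τ) (hp : 1 ≤ p) :
    (2 * p ^ (p/2) * rexp (p/2)) *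
      (2 * ((Real.sqrt (2 * π))⁻¹ * rexp (-(τ ^ 2) / 2) *
        (2 ^ p * (τ ^ p * τ⁻¹ + (2 * p) ^ (p / 2) * (2 * Real.sqrt π)))))
      ≤ (800 * p * τ) ^ p * ((Real.sqrt (2 * π))⁻¹ * rexp (-(τ ^ 2 + 3) / 2) * τ⁻¹) := by
  have hτ0 : (0:ℝ) < τ := one_pos.trans_le hτ
  have hp0 : (0:ℝ) < p := one_pos.trans_le hp
  have hττ : τ ≤ τ ^ p := by
    have := Real.rpow_le_rpow_of_exponent_le hτ hp
    rwa [Real.rpow_one] at this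
  have h2p1 : (1:ℝ) ≤ (2 * p) ^ (p / 2) := by
    calc (1:ℝ) = 1 ^ (p/2 : ℝ) := (Real.one_rpow _).symm
      _ ≤ (2 * p) ^ (p/2) := Real.rpow_le_rpow zero_le_one (by linarith) (by positivity)
  have key' : (4 * (p ^ (p/2) * rexp (p/2)) * (2 ^ p *
      (τ ^ p * τ⁻¹ + (2 * p) ^ (p / 2) * (2 * Real.sqrt π)))) * τ
      ≤ (800 * p * τ) ^ p * rexp (-(3:ℝ)/2) := by
    have hstep1 : τ ^ p + (2 * p) ^ (p / 2) * (2 * Real.sqrt π) * τ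
        ≤ 5 * (τ ^ p * (2 * p) ^ (p / 2)) := by
      have a1 : τ ^ p ≤ τ ^ p * (2 * p) ^ (p / 2) :=
        le_mul_of_one_le_right (Real.rpow_nonneg hτ0.le p) h2p1
      have a2 : (2 * p) ^ (p / 2) * (2 * Real.sqrt π) * τ
          ≤ (2 * p) ^ (p / 2) * 4 * τ ^ p := by
        have hs2 : 2 * Real.sqrt π ≤ 4 := by nlinarith [sqrt_pi_le_two]
        gcongr
      nlinarith
    have i1 : (2 * p) ^ (p / 2) = 2 ^ (p/2 : ℝ) * p ^ (p/2 : ℝ) :=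
      Real.mul_rpow (by norm_num) hp0.le
    have i2 : (2:ℝ) ^ (p/2 : ℝ) ≤ 2 ^ (p : ℝ) :=
      Real.rpow_le_rpow_of_exponent_le one_le_two (by linarith)
    have i3 : p ^ (p/2 : ℝ) * p ^ (p/2 : ℝ) = p ^ (p : ℝ) := by
      rw [← Real.rpow_add hp0]; congr 1; ring
    have i4 : (2:ℝ) ^ (p:ℝ) * 2 ^ (p:ℝ) * 2 ^ (p:ℝ) = (8:ℝ) ^ (p:ℝ) := by
      rw [← Real.rpow_add (by norm_num : (0:ℝ) < 2), ← Real.rpow_add (by norm_num : (0:ℝ) < 2)]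
      rw [show (8:ℝ) = 2 ^ ((3:ℕ):ℝ) by rw [Real.rpow_natCast]; norm_num]
      rw [← Real.rpow_mul (by norm_num : (0:ℝ) ≤ 2)]
      congr 1
      push_cast
      ring
    have hsplit8 : (800 * p * τ) ^ p = 100 ^ (p:ℝ) * ((8:ℝ) ^ (p:ℝ) * (p ^ (p:ℝ) * τ ^ p)) := by
      rw [show (800:ℝ) * p * τ = 100 * (8 * (p * τ)) by ring,
        Real.mul_rpow (by norm_num) (by positivity),
        Real.mul_rpow (by norm_num) (by positivity),
        Real.mul_rpow hp0.le hτ0.le]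
    have h100 : (100:ℝ) ≤ 100 ^ (p:ℝ) := by
      have := Real.rpow_le_rpow_of_exponent_le (by norm_num : (1:ℝ) ≤ 100) hp
      rwa [Real.rpow_one] at this
    calc (4 * (p ^ (p/2) * rexp (p/2)) * (2 ^ p *
        (τ ^ p * τ⁻¹ + (2 * p) ^ (p / 2) * (2 * Real.sqrt π)))) * τ
        = 4 * (p ^ (p/2) * rexp (p/2)) * 2 ^ p *
          (τ ^ p + (2 * p) ^ (p / 2) * (2 * Real.sqrt π) * τ) := by
          field_simp
      _ ≤ 4 * (p ^ (p/2) * 2 ^ p) * 2 ^ p * (5 * (τ ^ p * (2 * p) ^ (p / 2))) := by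
          have hx := exp_p_half_le hp0.le
          gcongr
      _ = 20 * (p ^ (p/2) * p ^ (p/2)) * (2 ^ (p:ℝ) * 2 ^ (p:ℝ) * 2 ^ (p/2 : ℝ)) * τ ^ p := by
          rw [i1]; ring
      _ ≤ 20 * (p ^ (p/2) * p ^ (p/2)) * (2 ^ (p:ℝ) * 2 ^ (p:ℝ) * 2 ^ (p:ℝ)) * τ ^ p := by
          gcongr
      _ = (100 * ((8:ℝ) ^ (p:ℝ) * (p ^ (p:ℝ) * τ ^ p))) * (1/5) := by
          rw [i3, i4]; ring
      _ ≤ (100 ^ (p:ℝ) * ((8:ℝ) ^ (p:ℝ) * (p ^ (p:ℝ) * τ ^ p))) * (1/5) := by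
          gcongr
      _ = (800 * p * τ) ^ p * (1/5) := by rw [hsplit8]
      _ ≤ (800 * p * τ) ^ p * rexp (-(3:ℝ)/2) := by
          have h5 : (1:ℝ)/5 ≤ rexp (-(3:ℝ)/2) := exp_neg32
          gcongr
  have hexp3 : rexp (-(τ ^ 2 + 3) / 2) = rexp (-(τ ^ 2) / 2) * rexp (-(3:ℝ)/2) := by
    rw [← Real.exp_add]; congr 1; ring
  calc (2 * p ^ (p/2) * rexp (p/2)) *
      (2 * ((Real.sqrt (2 * π))⁻¹ * rexp (-(τ ^ 2) / 2) *
        (2 ^ p * (τ ^ p * τ⁻¹ + (2 * p) ^ (p / 2) * (2 * Real.sqrt π)))))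
      = ((4 * (p ^ (p/2) * rexp (p/2)) * (2 ^ p *
          (τ ^ p * τ⁻¹ + (2 * p) ^ (p / 2) * (2 * Real.sqrt π)))) * τ) *
        ((Real.sqrt (2 * π))⁻¹ * rexp (-(τ ^ 2) / 2) * τ⁻¹) := by
        field_simp
        ring
    _ ≤ ((800 * p * τ) ^ p * rexp (-(3:ℝ)/2)) *
        ((Real.sqrt (2 * π))⁻¹ * rexp (-(τ ^ 2) / 2) * τ⁻¹) :=
        mul_le_mul_of_nonneg_right key' (by positivity)
    _ = (800 * p * τ) ^ p * ((Real.sqrt (2 * π))⁻¹ * rexp (-(τ ^ 2 + 3) / 2) * τ⁻¹) := by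
        rw [hexp3]; ring

theorem stmt15 :
    ∃ C > (0 : ℝ), ∀ (d : ℕ) (s : EuclideanSpace ℝ (Fin d)), ‖s‖ = 1 →
      ∀ τ : ℝ, 1 ≤ τ → ∀ p : ℝ, 1 ≤ p →
      p⁻¹ * ((∫ q in {q : EuclideanSpace ℝ (Fin d) × ℝ | τ ≤ |q.2|},
            |⟪q.1, s⟫ * q.2| ^ p ∂jointGaussian d)
          / ((jointGaussian d) {q | τ ≤ |q.2|}).toReal) ^ (1 / p)
        ≤ C * τ := by
  classical
  refine ⟨800, by norm_num, ?_⟩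
  intro d s hs τ hτ p hp
  have hp0 : (0:ℝ) < p := one_pos.trans_le hp
  have hτ0 : (0:ℝ) < τ := one_pos.trans_le hτ
  have hSet : {q : EuclideanSpace ℝ (Fin d) × ℝ | τ ≤ |q.2|}
      = (Set.univ : Set (EuclideanSpace ℝ (Fin d))) ×ˢ {y : ℝ | τ ≤ |y|} := by
    ext q
    simp [Set.mem_prod]
  have hμS : (jointGaussian d) {q : EuclideanSpace ℝ (Fin d) × ℝ | τ ≤ |q.2|}
      = (gaussianReal 0 1) {y : ℝ | τ ≤ |y|} := by
    rw [hSet, jointGaussian, Measure.prod_prod, measure_univ, one_mul]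
  have hint : (∫ q in {q : EuclideanSpace ℝ (Fin d) × ℝ | τ ≤ |q.2|},
        |⟪q.1, s⟫ * q.2| ^ p ∂jointGaussian d)
      = (∫ x, |⟪x, s⟫| ^ p ∂stdGaussian d)
        * ∫ y in {y : ℝ | τ ≤ |y|}, |y| ^ p ∂(gaussianReal 0 1) := by
    rw [hSet, jointGaussian, ← Measure.prod_restrict, Measure.restrict_univ]
    simp_rw [abs_mul, Real.mul_rpow (abs_nonneg _) (abs_nonneg _)]
    exact integral_prod_mul (fun x => |⟪x, s⟫| ^ p) (fun y => |y| ^ p)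
  rw [hint, hμS]
  set A := ∫ x, |⟪x, s⟫| ^ p ∂stdGaussian d with hA_def
  set B := ∫ y in {y : ℝ | τ ≤ |y|}, |y| ^ p ∂(gaussianReal 0 1) with hB_def
  set P := ((gaussianReal 0 1) {y : ℝ | τ ≤ |y|}).toReal with hP_def
  have hA : A ≤ 2 * p ^ (p/2) * Real.exp (p/2) := momentA s hs hp
  have hA0 : 0 ≤ A := integral_nonneg fun x => Real.rpow_nonneg (abs_nonneg _) p
  have hB : B ≤ 2 * ((Real.sqrt (2 * Real.pi))⁻¹ * Real.exp (-(τ ^ 2) / 2) *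
      (2 ^ p * (τ ^ p * τ⁻¹ + (2 * p) ^ (p / 2) * (2 * Real.sqrt Real.pi)))) := by
    rw [hB_def, tail_split hτ hp]
    have := tail_Ici_bound hτ hp
    linarith
  have hB0 : 0 ≤ B := integral_nonneg fun y => Real.rpow_nonneg (abs_nonneg _) p
  have hP : (Real.sqrt (2 * Real.pi))⁻¹ * Real.exp (-(τ ^ 2 + 3) / 2) * τ⁻¹ ≤ P :=
    tail_measure_lb hτ
  have hL0 : (0:ℝ) < (Real.sqrt (2 * Real.pi))⁻¹ * Real.exp (-(τ ^ 2 + 3) / 2) * τ⁻¹ := by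
    positivity
  have hP0 : (0:ℝ) < P := lt_of_lt_of_le hL0 hP
  have hprod : A * B ≤ (2 * p ^ (p/2) * Real.exp (p/2)) *
      (2 * ((Real.sqrt (2 * Real.pi))⁻¹ * Real.exp (-(τ ^ 2) / 2) *
        (2 ^ p * (τ ^ p * τ⁻¹ + (2 * p) ^ (p / 2) * (2 * Real.sqrt Real.pi))))) :=
    mul_le_mul hA hB hB0 (by positivity)
  have hdiv : A * B / P ≤ ((2 * p ^ (p/2) * Real.exp (p/2)) *
      (2 * ((Real.sqrt (2 * Real.pi))⁻¹ * Real.exp (-(τ ^ 2) / 2) *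
        (2 ^ p * (τ ^ p * τ⁻¹ + (2 * p) ^ (p / 2) * (2 * Real.sqrt Real.pi))))))
      / ((Real.sqrt (2 * Real.pi))⁻¹ * Real.exp (-(τ ^ 2 + 3) / 2) * τ⁻¹) :=
    div_le_div₀ (by positivity) hprod hL0 hP
  have hfin : A * B / P ≤ (800 * p * τ) ^ p := by
    refine hdiv.trans ?_
    rw [div_le_iff₀ hL0]
    exact final_numeric hτ hp
  have h800 : (0:ℝ) ≤ 800 * p * τ := by positivity
  have hstep : (A * B / P) ^ (1/p) ≤ 800 * p * τ := by
    calc (A * B / P) ^ (1/p) ≤ ((800 * p * τ) ^ p) ^ (1/p) :=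
        Real.rpow_le_rpow (div_nonneg (mul_nonneg hA0 hB0) hP0.le) hfin (by positivity)
      _ = 800 * p * τ := by
        rw [← Real.rpow_mul h800, mul_one_div_cancel hp0.ne', Real.rpow_one]
  calc p⁻¹ * (A * B / P) ^ (1/p) ≤ p⁻¹ * (800 * p * τ) :=
      mul_le_mul_of_nonneg_left hstep (by positivity)
    _ = 800 * τ := by field_simp
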